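/- For a sparse JL distribution, if x ∈ ℝⁿ satisfies ||x||_∞ ≤ v and ||x||₂ ≤ 1, and T is an even natural number, then ||Z_r(x)||_T = ||Σ_{i≠j} η_{r,i}η_{r,j}σ_{r,i}σ_{r,j}x_ix_j||_T ≲ v²·sup_{1≤t≤T/2} (T²/t²)·(s/(mTv²))^{1/t}, where the supremum is over integers t. -/

import Mathlib

open MeasureTheory ProbabilityTheory Real Finset
open scoped BigOperators ENNReal NNReal Classical

noncomputable section

/-- Euclidean (`ℓ₂`) norm of a finite real vector. -/
def l2 {k : ℕ} (x : Fin k → ℝ) : ℝ := Real.sqrt (∑ i, x i ^ 2)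

/-- Sup (`ℓ_∞`) norm of a finite real vector. -/
def linf {k : ℕ} (x : Fin k → ℝ) : ℝ := ⨆ i, |x i|

/-- The moment norm `‖X‖_q = (E |X|^q)^{1/q}`. -/
def mom {Ω : Type*} [MeasurableSpace Ω] (μ : Measure Ω) (q : ℝ) (X : Ω → ℝ) : ℝ :=
  (∫ ω, |X ω| ^ q ∂μ) ^ (1 / q)

/-- A sparse JL distribution, presented by the random families `σ` (Rademachers) and
`η` (Bernoulli selectors) on a probability space. -/
structure SparseJL {Ω : Type*} [MeasurableSpace Ω] (μ : Measure Ω) (n m s : ℕ) where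
  σ : Fin m → Fin n → Ω → ℝ
  η : Fin m → Fin n → Ω → ℝ
  σ_meas : ∀ r i, Measurable (σ r i)
  η_meas : ∀ r i, Measurable (η r i)
  σ_rademacher : ∀ r i, μ {ω | σ r i ω = 1} = 1/2 ∧ μ {ω | σ r i ω = -1} = 1/2
  σ_indep : iIndepFun (fun p ω => σ p.1 p.2 ω : Fin m × Fin n → Ω → ℝ) μ
  η_bool : ∀ r i ω, η r i ω = 0 ∨ η r i ω = 1
  η_mean : ∀ r i, ∫ ω, η r i ω ∂μ = (s : ℝ) / (m : ℝ)
  σ_η_indep : IndepFun (fun ω (p : Fin m × Fin n) => σ p.1 p.2 ω)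
      (fun ω (p : Fin m × Fin n) => η p.1 p.2 ω) μ
  η_cols_indep : iIndepFun (fun i ω r => η r i ω : Fin n → Ω → Fin m → ℝ) μ
  η_col_sum : ∀ i ω, ∑ r, η r i ω = (s : ℝ)
  η_neg_corr : ∀ i (S : Finset (Fin m)),
      ∫ ω, ∏ r ∈ S, η r i ω ∂μ ≤ ((s : ℝ) / (m : ℝ)) ^ S.card

/-- A uniform sparse JL distribution: each column's support is a uniformly random
`s`-subset of the rows. -/
structure UniformSparseJL {Ω : Type*} [MeasurableSpace Ω] (μ : Measure Ω) (n m s : ℕ)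
    extends SparseJL μ n m s where
  uniform : ∀ (i : Fin n) (S : Finset (Fin m)), S.card = s →
      μ {ω | ∀ r, η r i ω = if r ∈ S then 1 else 0} = ((Nat.choose m s : ℝ≥0∞))⁻¹

namespace SparseJL

variable {Ω : Type*} [MeasurableSpace Ω] {μ : Measure Ω} {n m s : ℕ}

/-- The random matrix entry `A_{r,i} = η_{r,i} σ_{r,i} / √s`. -/
def A (J : SparseJL μ n m s) (ω : Ω) (r : Fin m) (i : Fin n) : ℝ :=
  J.η r i ω * J.σ r i ω / Real.sqrt s

/-- The row error term `Z_r(x) = Σ_{i ≠ j} η_{r,i} η_{r,j} σ_{r,i} σ_{r,j} x_i x_j`. -/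
def Z (J : SparseJL μ n m s) (r : Fin m) (x : Fin n → ℝ) (ω : Ω) : ℝ :=
  ∑ i, ∑ j, if i ≠ j then
    J.η r i ω * J.η r j ω * J.σ r i ω * J.σ r j ω * x i * x j else 0

/-- The error term `R(x) = (1/s) Σ_r Z_r(x)`. -/
def R (J : SparseJL μ n m s) (x : Fin n → ℝ) (ω : Ω) : ℝ :=
  (1 / (s : ℝ)) * ∑ r, J.Z r x ω

/-- `v(m, ε, δ, s)`: the sup of all `v ∈ [0,1]` such that the JL norm-preservation
condition holds with distortion `ε` and failure probability `δ` on
`S_v = {x : ‖x‖_∞ ≤ v ‖x‖₂}`. -/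
def vstat (J : SparseJL μ n m s) (ε δ : ℝ) : ℝ :=
  sSup {v : ℝ | v ∈ Set.Icc (0:ℝ) 1 ∧ ∀ x : Fin n → ℝ, linf x ≤ v * l2 x →
    ENNReal.ofReal (1 - δ) <
      μ {ω | (1 - ε) * l2 x ≤ l2 (fun r => ∑ i, J.A ω r i * x i) ∧
             l2 (fun r => ∑ i, J.A ω r i * x i) ≤ (1 + ε) * l2 x}}

end SparseJL

/-- The vector `(v, …, v, 0, …, 0)` with `N` nonzero coordinates. -/
def vVec (n N : ℕ) (v : ℝ) : Fin n → ℝ := fun i => if (i : ℕ) < N then v else 0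

/-- Decreasing rearrangement of a finite tuple of reals. -/
def decSort {k : ℕ} (w : Fin k → ℝ) : Fin k → ℝ := w ∘ (Tuple.sort (fun i => -w i))

section ProbAux
variable {Ω : Type*} [MeasurableSpace Ω] {μ : Measure Ω}

lemma SJL_integrable_of_bdd [IsProbabilityMeasure μ] {f : Ω → ℝ} (hm : Measurable f)
    (h : ∀ᵐ ω ∂μ, |f ω| ≤ 1) : Integrable f μ :=
  (integrable_const (1:ℝ)).mono' hm.aestronglyMeasurable (by simpa [Real.norm_eq_abs] using h)

lemma SJL_prod_ae_bdd {ι : Type*} (X : ι → Ω → ℝ) (h : ∀ i, ∀ᵐ ω ∂μ, |X i ω| ≤ 1)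
    (S : Finset ι) : ∀ᵐ ω ∂μ, |∏ i ∈ S, X i ω| ≤ 1 := by
  classical
  induction S using Finset.induction_on with
  | empty => simp
  | @insert a S ha ih =>
    filter_upwards [ih, h a] with ω h1 h2
    rw [Finset.prod_insert ha, abs_mul]
    exact mul_le_one₀ h2 (abs_nonneg _) h1

lemma SJL_integral_finset_prod {ι : Type*} [IsProbabilityMeasure μ] (X : ι → Ω → ℝ)
    (hind : iIndepFun X μ)
    (hmeas : ∀ i, Measurable (X i)) (hbdd : ∀ i, ∀ᵐ ω ∂μ, |X i ω| ≤ 1) (S : Finset ι) :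
    ∫ ω, ∏ i ∈ S, X i ω ∂μ = ∏ i ∈ S, ∫ ω, X i ω ∂μ := by
  classical
  induction S using Finset.induction_on with
  | empty => simp
  | @insert a S ha ih =>
    have h1 : IndepFun (∏ j ∈ S, X j) (X a) μ :=
      hind.indepFun_finsetProd_of_notMem hmeas ha
    have hintS : Integrable (∏ j ∈ S, X j) μ := by
      refine SJL_integrable_of_bdd (by fun_prop) ?_
      have := SJL_prod_ae_bdd X hbdd S
      filter_upwards [this] with ω hω
      simpa [Finset.prod_apply] using hω
    have hinta : Integrable (X a) μ := SJL_integrable_of_bdd (hmeas a) (hbdd a)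
    have h2 := h1.integral_mul_eq_mul_integral hintS.aestronglyMeasurable hinta.aestronglyMeasurable
    calc ∫ ω, ∏ i ∈ insert a S, X i ω ∂μ
        = ∫ ω, ((∏ j ∈ S, X j) * X a) ω ∂μ := by
          refine integral_congr_ae (Filter.Eventually.of_forall fun ω => ?_)
          simp [Finset.prod_insert ha, Finset.prod_apply, mul_comm]
      _ = (∫ ω, (∏ j ∈ S, X j) ω ∂μ) * ∫ ω, X a ω ∂μ := h2
      _ = ∏ i ∈ insert a S, ∫ ω, X i ω ∂μ := by
          rw [Finset.prod_insert ha, ← ih]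
          rw [mul_comm]
          congr 1
          refine integral_congr_ae (Filter.Eventually.of_forall fun ω => ?_)
          simp [Finset.prod_apply]

lemma SJL_rademacher_ae [IsProbabilityMeasure μ] {f : Ω → ℝ} (hm : Measurable f)
    (h1 : μ {ω | f ω = 1} = 1/2) (h2 : μ {ω | f ω = -1} = 1/2) :
    ∀ᵐ ω ∂μ, f ω = 1 ∨ f ω = -1 := by
  have hA : MeasurableSet {ω | f ω = 1} := hm (measurableSet_singleton 1)
  have hB : MeasurableSet {ω | f ω = -1} := hm (measurableSet_singleton (-1))
  have hd : Disjoint {ω | f ω = 1} {ω | f ω = -1} := by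
    rw [Set.disjoint_left]
    rintro ω hω1 hω2
    simp only [Set.mem_setOf_eq] at hω1 hω2
    rw [hω1] at hω2; norm_num at hω2
  have hu : μ ({ω | f ω = 1} ∪ {ω | f ω = -1}) = 1 := by
    rw [measure_union hd hB, h1, h2, ENNReal.add_halves]
  have hc : μ ({ω | f ω = 1} ∪ {ω | f ω = -1})ᶜ = 0 := by
    rw [measure_compl (hA.union hB) (measure_ne_top _ _), hu, measure_univ, tsub_self]
  have hset : {ω | ¬(f ω = 1 ∨ f ω = -1)} = ({ω | f ω = 1} ∪ {ω | f ω = -1})ᶜ := by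
    ext ω; simp [not_or]
  rw [ae_iff, hset]
  exact hc

lemma SJL_rademacher_integral [IsProbabilityMeasure μ] {f : Ω → ℝ} (hm : Measurable f)
    (h1 : μ {ω | f ω = 1} = 1/2) (h2 : μ {ω | f ω = -1} = 1/2) :
    ∫ ω, f ω ∂μ = 0 := by
  have hA : MeasurableSet {ω | f ω = 1} := hm (measurableSet_singleton 1)
  have hB : MeasurableSet {ω | f ω = -1} := hm (measurableSet_singleton (-1))
  have hfeq : f =ᵐ[μ] fun ω => Set.indicator {ω | f ω = 1} (fun _ => (1:ℝ)) ω
      - Set.indicator {ω | f ω = -1} (fun _ => (1:ℝ)) ω := by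
    filter_upwards [SJL_rademacher_ae hm h1 h2] with ω hω
    rcases hω with h | h
    · have hnot : ω ∉ {ω | f ω = -1} := by simp only [Set.mem_setOf_eq, h]; norm_num
      simp [Set.indicator_apply, Set.mem_setOf_eq, h, hnot]
    · have hnot : ω ∉ {ω | f ω = 1} := by simp only [Set.mem_setOf_eq, h]; norm_num
      simp [Set.indicator_apply, Set.mem_setOf_eq, h, hnot]
  rw [integral_congr_ae hfeq, integral_sub ((integrable_const (1:ℝ)).indicator hA)
    ((integrable_const (1:ℝ)).indicator hB), integral_indicator_const _ hA,
    integral_indicator_const _ hB, measureReal_def, measureReal_def, h1, h2]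
  ring

end ProbAux


section CombAux

lemma SJL_esymm_le {α : Type*} [Fintype α] [DecidableEq α] (y : α → ℝ) (hy : ∀ i, 0 ≤ y i) :
    ∀ d : ℕ, (d.factorial : ℝ) * ∑ D ∈ Finset.powersetCard d Finset.univ, ∏ i ∈ D, y i
      ≤ (∑ i, y i) ^ d := by
  intro d
  induction d with
  | zero => simp
  | succ d ih =>
    have hsum0 : 0 ≤ ∑ i, y i := Finset.sum_nonneg fun i _ => hy i
    have hprod0 : ∀ D : Finset α, 0 ≤ ∏ i ∈ D, y i :=
      fun D => Finset.prod_nonneg fun i _ => hy i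
    set pr := (Finset.powersetCard d (Finset.univ : Finset α)).sigma
        (fun D => Finset.univ \ D) with hpr
    have hQ1 : ∑ p ∈ pr, ∏ i ∈ insert p.2 p.1, y i
        ≤ (∑ i, y i) * ∑ D ∈ Finset.powersetCard d Finset.univ, ∏ i ∈ D, y i := by
      rw [Finset.sum_sigma]
      calc ∑ D ∈ Finset.powersetCard d Finset.univ, ∑ i ∈ Finset.univ \ D,
              ∏ j ∈ insert i D, y j
          = ∑ D ∈ Finset.powersetCard d Finset.univ,
              (∏ j ∈ D, y j) * ∑ i ∈ Finset.univ \ D, y i := by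
            refine Finset.sum_congr rfl fun D _ => ?_
            rw [Finset.mul_sum]
            refine Finset.sum_congr rfl fun i hi => ?_
            rw [Finset.prod_insert (Finset.mem_sdiff.1 hi).2]
            ring
        _ ≤ ∑ D ∈ Finset.powersetCard d Finset.univ, (∏ j ∈ D, y j) * ∑ i, y i := by
            refine Finset.sum_le_sum fun D _ => ?_
            refine mul_le_mul_of_nonneg_left ?_ (hprod0 D)
            exact Finset.sum_le_sum_of_subset_of_nonneg (Finset.sdiff_subset)
              (fun i _ _ => hy i)
        _ = (∑ i, y i) * ∑ D ∈ Finset.powersetCard d Finset.univ, ∏ i ∈ D, y i := by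
            rw [← Finset.sum_mul]; ring
    have hQ2 : ((d:ℝ)+1) * ∑ D ∈ Finset.powersetCard (d+1) Finset.univ, ∏ i ∈ D, y i
        ≤ ∑ p ∈ pr, ∏ i ∈ insert p.2 p.1, y i := by
      have hcomp := Finset.sum_comp (s := pr) (fun D : Finset α => ∏ i ∈ D, y i)
        (fun p : Σ _ : Finset α, α => insert p.2 p.1)
      rw [hcomp]
      have hsub : Finset.powersetCard (d+1) (Finset.univ : Finset α)
          ⊆ pr.image (fun p : Σ _ : Finset α, α => insert p.2 p.1) := by
        intro D hD
        rw [Finset.mem_powersetCard] at hD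
        have hne : D.Nonempty := Finset.card_pos.1 (by omega)
        obtain ⟨i, hi⟩ := hne
        refine Finset.mem_image.2 ⟨⟨D.erase i, i⟩, ?_, ?_⟩
        · rw [Finset.mem_sigma]
          refine ⟨Finset.mem_powersetCard.2 ⟨Finset.subset_univ _, ?_⟩, ?_⟩
          · rw [Finset.card_erase_of_mem hi, hD.2]
            omega
          · exact Finset.mem_sdiff.2 ⟨Finset.mem_univ _, Finset.notMem_erase i D⟩
        · exact Finset.insert_erase hi
      have hfib : ∀ D ∈ Finset.powersetCard (d+1) (Finset.univ : Finset α),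
          (d+1 : ℕ) ≤ (pr.filter fun p : Σ _ : Finset α, α => insert p.2 p.1 = D).card := by
        intro D hD
        rw [Finset.mem_powersetCard] at hD
        have : D.card ≤ (pr.filter fun p : Σ _ : Finset α, α => insert p.2 p.1 = D).card := by
          refine Finset.card_le_card_of_injOn
            (fun i => (⟨D.erase i, i⟩ : Σ _ : Finset α, α)) ?_ ?_
          · intro i hi
            refine Finset.mem_filter.2 ⟨?_, Finset.insert_erase hi⟩
            rw [Finset.mem_sigma]
            refine ⟨Finset.mem_powersetCard.2 ⟨Finset.subset_univ _, ?_⟩, ?_⟩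
            · rw [Finset.card_erase_of_mem hi, hD.2]
              omega
            · exact Finset.mem_sdiff.2 ⟨Finset.mem_univ _, Finset.notMem_erase i D⟩
          · intro i _ j _ h
            exact congrArg (fun p : Σ _ : Finset α, α => p.2) h
        omega
      calc ((d:ℝ)+1) * ∑ D ∈ Finset.powersetCard (d+1) Finset.univ, ∏ i ∈ D, y i
          = ∑ D ∈ Finset.powersetCard (d+1) Finset.univ, ((d:ℝ)+1) * ∏ i ∈ D, y i := by
            rw [Finset.mul_sum]
        _ ≤ ∑ D ∈ Finset.powersetCard (d+1) Finset.univ,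
              ((pr.filter fun p : Σ _ : Finset α, α => insert p.2 p.1 = D).card : ℝ)
                * ∏ i ∈ D, y i := by
            refine Finset.sum_le_sum fun D hD => ?_
            have hc : ((d:ℝ)+1) ≤ ((pr.filter fun p : Σ _ : Finset α, α
                => insert p.2 p.1 = D).card : ℝ) := by exact_mod_cast hfib D hD
            exact mul_le_mul_of_nonneg_right hc (hprod0 D)
        _ ≤ ∑ D ∈ pr.image (fun p : Σ _ : Finset α, α => insert p.2 p.1),
              ((pr.filter fun p : Σ _ : Finset α, α => insert p.2 p.1 = D).card : ℝ)
                * ∏ i ∈ D, y i := by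
            refine Finset.sum_le_sum_of_subset_of_nonneg hsub fun D _ _ => ?_
            exact mul_nonneg (Nat.cast_nonneg _) (hprod0 D)
        _ = ∑ D ∈ pr.image (fun p : Σ _ : Finset α, α => insert p.2 p.1),
              (pr.filter fun p : Σ _ : Finset α, α => insert p.2 p.1 = D).card
                • ∏ i ∈ D, y i := by
            refine Finset.sum_congr rfl fun D _ => ?_
            rw [nsmul_eq_mul]
    calc ((d+1).factorial : ℝ)
          * ∑ D ∈ Finset.powersetCard (d+1) Finset.univ, ∏ i ∈ D, y i
        = (d.factorial : ℝ) * (((d:ℝ)+1)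
            * ∑ D ∈ Finset.powersetCard (d+1) Finset.univ, ∏ i ∈ D, y i) := by
          rw [Nat.factorial_succ]; push_cast; ring
      _ ≤ (d.factorial : ℝ) * ((∑ i, y i)
            * ∑ D ∈ Finset.powersetCard d Finset.univ, ∏ i ∈ D, y i) := by
          refine mul_le_mul_of_nonneg_left (le_trans hQ2 hQ1) (Nat.cast_nonneg _)
      _ = (∑ i, y i) * ((d.factorial : ℝ)
            * ∑ D ∈ Finset.powersetCard d Finset.univ, ∏ i ∈ D, y i) := by ring
      _ ≤ (∑ i, y i) * (∑ i, y i) ^ d := mul_le_mul_of_nonneg_left ih hsum0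
      _ = (∑ i, y i) ^ (d+1) := by ring

lemma SJL_pow_le_exp_factorial : ∀ d : ℕ, (d:ℝ)^d ≤ (Real.exp 1)^d * d.factorial := by
  intro d
  induction d with
  | zero => simp
  | succ d ih =>
    have hexp1 : (1:ℝ) ≤ Real.exp 1 := by nlinarith [Real.add_one_le_exp (1:ℝ)]
    have hpow : ((d:ℝ)+1)^d ≤ Real.exp 1 * (d:ℝ)^d := by
      rcases Nat.eq_zero_or_pos d with hd | hd
      · subst hd; simpa using hexp1
      · have hd0 : (0:ℝ) < d := by exact_mod_cast hd
        have h1 : (1:ℝ) + 1/d ≤ Real.exp (1/d) := by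
          have := Real.add_one_le_exp (1/(d:ℝ)); linarith
        have h2 : ((1:ℝ) + 1/d)^d ≤ Real.exp 1 := by
          calc ((1:ℝ) + 1/d)^d ≤ (Real.exp (1/(d:ℝ)))^d := pow_le_pow_left₀ (by positivity) h1 d
            _ = Real.exp 1 := by rw [← Real.exp_nat_mul]; congr 1; field_simp
        calc ((d:ℝ)+1)^d = ((1:ℝ)+1/d)^d * (d:ℝ)^d := by
              rw [← mul_pow]; congr 1; field_simp
          _ ≤ Real.exp 1 * (d:ℝ)^d := mul_le_mul_of_nonneg_right h2 (by positivity)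
    have hcast : ((d+1:ℕ):ℝ)^(d+1) = ((d:ℝ)+1)^d * ((d:ℝ)+1) := by push_cast; rw [pow_succ]
    rw [hcast, Nat.factorial_succ]
    push_cast
    calc ((d:ℝ)+1)^d * ((d:ℝ)+1) ≤ (Real.exp 1 * (d:ℝ)^d) * ((d:ℝ)+1) :=
          mul_le_mul_of_nonneg_right hpow (by positivity)
      _ ≤ (Real.exp 1 * ((Real.exp 1)^d * d.factorial)) * ((d:ℝ)+1) := by
          refine mul_le_mul_of_nonneg_right (mul_le_mul_of_nonneg_left ih
            (Real.exp_pos 1).le) (by positivity)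
      _ = (Real.exp 1)^(d+1) * (((d:ℝ)+1) * (d.factorial:ℝ)) := by ring

end CombAux


section CntAux
variable {n T : ℕ}

/-- flattened index sequence of a sequence of pairs -/
def SJLidx (g : Fin T → Fin n × Fin n) : Fin T × Bool → Fin n :=
  fun kb => if kb.2 then (g kb.1).2 else (g kb.1).1

/-- multiplicity of index `i` -/
def SJLcnt (g : Fin T → Fin n × Fin n) (i : Fin n) : ℕ :=
  ((Finset.univ : Finset (Fin T × Bool)).filter fun kb => SJLidx g kb = i).card

lemma SJL_prod_idx {M : Type*} [CommMonoid M] (g : Fin T → Fin n × Fin n) (F : Fin n → M) :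
    ∏ k, (F (g k).1 * F (g k).2) = ∏ i, F i ^ SJLcnt g i := by
  classical
  have h1 : ∏ kb : Fin T × Bool, F (SJLidx g kb) = ∏ k, (F (g k).1 * F (g k).2) := by
    rw [Fintype.prod_prod_type]
    refine Finset.prod_congr rfl fun k _ => ?_
    rw [Fintype.prod_bool]
    simp [SJLidx, mul_comm]
  rw [← h1, Finset.prod_comp F (SJLidx g)]
  refine Finset.prod_subset (Finset.subset_univ _) fun i _ hni => ?_
  have hz : SJLcnt g i = 0 := by
    rw [SJLcnt, Finset.card_eq_zero, Finset.filter_eq_empty_iff]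
    intro kb _ h
    exact hni (Finset.mem_image.2 ⟨kb, Finset.mem_univ _, h⟩)
  rw [show #(filter (fun a => SJLidx g a = i) univ) = SJLcnt g i from rfl, hz, pow_zero]

lemma SJL_cnt_sum (g : Fin T → Fin n × Fin n) : ∑ i, SJLcnt g i = 2 * T := by
  classical
  have := Finset.card_eq_sum_card_fiberwise
    (f := SJLidx g) (s := (Finset.univ : Finset (Fin T × Bool)))
    (t := (Finset.univ : Finset (Fin n))) (fun kb _ => Finset.mem_univ _)
  have h2 : ∑ i, SJLcnt g i = #(Finset.univ : Finset (Fin T × Bool)) := by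
    rw [this]; rfl
  rw [h2]
  simp [Finset.card_univ]
  ring

lemma SJL_cnt_fst_ne (g : Fin T → Fin n × Fin n) (k : Fin T) : SJLcnt g (g k).1 ≠ 0 := by
  have : (k, false) ∈ (Finset.univ : Finset (Fin T × Bool)).filter
      (fun kb => SJLidx g kb = (g k).1) := Finset.mem_filter.2 ⟨Finset.mem_univ _, rfl⟩
  rw [SJLcnt]
  exact Finset.card_ne_zero_of_mem this

lemma SJL_cnt_snd_ne (g : Fin T → Fin n × Fin n) (k : Fin T) : SJLcnt g (g k).2 ≠ 0 := by
  have : (k, true) ∈ (Finset.univ : Finset (Fin T × Bool)).filter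
      (fun kb => SJLidx g kb = (g k).2) := Finset.mem_filter.2 ⟨Finset.mem_univ _, rfl⟩
  rw [SJLcnt]
  exact Finset.card_ne_zero_of_mem this

end CntAux


section Analytic

lemma SJL_sSup_nonneg (s m T : ℕ) (v : ℝ) (hT : 0 < T) (hTe : Even T) :
    (0:ℝ) ≤ sSup {z : ℝ | ∃ t : ℕ, 1 ≤ t ∧ t ≤ T / 2 ∧
      z = ((T : ℝ) ^ 2 / (t : ℝ) ^ 2) *
        ((s : ℝ) / ((m : ℝ) * T * v ^ 2)) ^ ((1 : ℝ) / t)} := by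
  obtain ⟨u, hu⟩ := hTe
  have hu1 : 1 ≤ u := by omega
  have hT2 : 1 ≤ T / 2 := by omega
  set f : ℕ → ℝ := fun t => ((T : ℝ) ^ 2 / (t : ℝ) ^ 2) *
      ((s : ℝ) / ((m : ℝ) * T * v ^ 2)) ^ ((1 : ℝ) / t) with hf
  have hset : {z : ℝ | ∃ t : ℕ, 1 ≤ t ∧ t ≤ T / 2 ∧ z = f t}
      = ↑((Finset.Icc 1 (T/2)).image f) := by
    ext z
    simp only [Finset.coe_image, Set.mem_image, Finset.mem_coe, Finset.mem_Icc,
      Set.mem_setOf_eq]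
    constructor
    · rintro ⟨t, h1, h2, h3⟩; exact ⟨t, ⟨h1, h2⟩, h3.symm⟩
    · rintro ⟨t, ⟨h1, h2⟩, h3⟩; exact ⟨t, h1, h2, h3.symm⟩
  have hbdd : BddAbove {z : ℝ | ∃ t : ℕ, 1 ≤ t ∧ t ≤ T / 2 ∧ z = f t} := by
    rw [hset]; exact Finset.bddAbove _
  have hmem : f 1 ∈ {z : ℝ | ∃ t : ℕ, 1 ≤ t ∧ t ≤ T / 2 ∧ z = f t} :=
    ⟨1, le_refl _, hT2, rfl⟩
  have h0 : 0 ≤ f 1 := by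
    apply mul_nonneg
    · positivity
    · exact Real.rpow_nonneg (by positivity) _
  exact le_trans h0 (le_csSup hbdd hmem)

lemma SJL_analytic (s m T : ℕ) (v : ℝ) (hv : 0 < v) (hm : 0 < m) (hT : 0 < T)
    (hTe : Even T) :
    ∑ d ∈ Finset.Icc 2 T, (d:ℝ)^(2*T)/(d.factorial : ℝ) * ((s:ℝ)/(m:ℝ))^d * v^(2*(T-d))
      ≤ (16 * Real.exp 1 * (v^2 * sSup {z : ℝ | ∃ t : ℕ, 1 ≤ t ∧ t ≤ T / 2 ∧
          z = ((T : ℝ) ^ 2 / (t : ℝ) ^ 2) *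
            ((s : ℝ) / ((m : ℝ) * T * v ^ 2)) ^ ((1 : ℝ) / t)})) ^ T := by
  obtain ⟨u, hu⟩ := hTe
  have hu1 : 1 ≤ u := by omega
  have hT2 : 1 ≤ T / 2 := by omega
  have he2 : (2:ℝ) ≤ Real.exp 1 := by nlinarith [Real.add_one_le_exp (1:ℝ)]
  have he0' : (0:ℝ) < Real.exp 1 := Real.exp_pos 1
  obtain ⟨e1, he1def⟩ : ∃ e1 : ℝ, e1 = Real.exp 1 := ⟨_, rfl⟩
  have he1 : (1:ℝ) ≤ e1 := by rw [he1def]; linarith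
  have he0 : (0:ℝ) < e1 := by rw [he1def]; exact he0'
  obtain ⟨lam, hlam⟩ : ∃ lam : ℝ, lam = (s : ℝ) / ((m : ℝ) * T * v ^ 2) := ⟨_, rfl⟩
  obtain ⟨f, hf⟩ : ∃ f : ℕ → ℝ, f = fun t : ℕ => ((T : ℝ) ^ 2 / (t : ℝ) ^ 2) *
      lam ^ ((1 : ℝ) / t) := ⟨_, rfl⟩
  have hsetf : {z : ℝ | ∃ t : ℕ, 1 ≤ t ∧ t ≤ T / 2 ∧
      z = ((T : ℝ) ^ 2 / (t : ℝ) ^ 2) *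
        ((s : ℝ) / ((m : ℝ) * T * v ^ 2)) ^ ((1 : ℝ) / t)}
      = {z : ℝ | ∃ t : ℕ, 1 ≤ t ∧ t ≤ T / 2 ∧ z = f t} := by
    rw [hf, hlam]
  rw [hsetf]
  obtain ⟨Q, hQ⟩ : ∃ Q : ℝ, Q = sSup {z : ℝ | ∃ t : ℕ, 1 ≤ t ∧ t ≤ T / 2 ∧ z = f t} :=
    ⟨_, rfl⟩
  rw [← hQ]
  have hset : {z : ℝ | ∃ t : ℕ, 1 ≤ t ∧ t ≤ T / 2 ∧ z = f t}
      = ↑((Finset.Icc 1 (T/2)).image f) := by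
    ext z
    simp only [Finset.coe_image, Set.mem_image, Finset.mem_coe, Finset.mem_Icc,
      Set.mem_setOf_eq]
    constructor
    · rintro ⟨t, h1, h2, h3⟩; exact ⟨t, ⟨h1, h2⟩, h3.symm⟩
    · rintro ⟨t, ⟨h1, h2⟩, h3⟩; exact ⟨t, h1, h2, h3.symm⟩
  have hbdd : BddAbove {z : ℝ | ∃ t : ℕ, 1 ≤ t ∧ t ≤ T / 2 ∧ z = f t} := by
    rw [hset]; exact Finset.bddAbove _
  have hmemQ : ∀ t : ℕ, 1 ≤ t → t ≤ T/2 → f t ≤ Q := by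
    intro t h1 h2
    rw [hQ]
    exact le_csSup hbdd ⟨t, h1, h2, rfl⟩
  have hlam0 : 0 ≤ lam := by rw [hlam]; positivity
  have hf0 : ∀ t : ℕ, 0 ≤ f t := by
    intro t
    rw [hf]
    exact mul_nonneg (by positivity) (Real.rpow_nonneg hlam0 _)
  have hQ0 : (0:ℝ) ≤ Q := le_trans (hf0 1) (hmemQ 1 le_rfl hT2)
  have hq0 : (0:ℝ) ≤ (s:ℝ)/(m:ℝ) := by positivity
  obtain ⟨q, hqdef⟩ : ∃ q : ℝ, q = (s:ℝ)/(m:ℝ) := ⟨_, rfl⟩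
  rw [← hqdef] at hq0 ⊢
  have hmpos : (0:ℝ) < (m:ℝ) := by exact_mod_cast hm
  have hTpos : (0:ℝ) < (T:ℝ) := by exact_mod_cast hT
  have hvne : v ≠ 0 := ne_of_gt hv
  have hql : q = lam * ((T:ℝ) * v^2) := by
    rw [hqdef, hlam]
    field_simp
  obtain ⟨B, hB⟩ : ∃ B : ℝ, B = 8 * e1 * (v^2 * Q) := ⟨_, rfl⟩
  have hB0 : 0 ≤ B := by
    rw [hB]
    exact mul_nonneg (mul_nonneg (by norm_num) he0.le) (mul_nonneg (sq_nonneg v) hQ0)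
  have hKd : ∀ d ∈ Finset.Icc 2 T,
      (d:ℝ)^(2*T)/(d.factorial : ℝ) * q^d * v^(2*(T-d)) ≤ B ^ T := by
    intro d hd
    rw [Finset.mem_Icc] at hd
    obtain ⟨hd2, hdT⟩ := hd
    have hd0 : (0:ℝ) < (d:ℝ) := by exact_mod_cast (show 0 < d by omega)
    have hdne : (d:ℝ) ≠ 0 := ne_of_gt hd0
    have hdfac : (0:ℝ) < (d.factorial : ℝ) := by exact_mod_cast d.factorial_pos
    by_cases hs0 : s = 0
    · have hq' : q = 0 := by rw [hqdef, hs0]; simp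
      rw [hq', zero_pow (show d ≠ 0 by omega)]
      simp only [mul_zero, zero_mul]
      exact pow_nonneg hB0 T
    · have hspos : (0:ℝ) < (s:ℝ) := by exact_mod_cast Nat.pos_of_ne_zero hs0
      have hs1 : (0:ℝ) < q := by rw [hqdef]; exact div_pos hspos hmpos
      have hlamp : (0:ℝ) < lam := by
        rw [hlam]; exact div_pos hspos (by positivity)
      obtain ⟨mu, hmu⟩ : ∃ mu : ℝ, mu = e1 * q / ((d:ℝ) * v^2) := ⟨_, rfl⟩
      have hmu0 : (0:ℝ) < mu := by
        rw [hmu]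
        exact div_pos (mul_pos he0 hs1) (mul_pos hd0 (pow_pos hv 2))
      have hfrac : (1:ℝ)/(d.factorial:ℝ) ≤ e1^d/(d:ℝ)^d := by
        rw [div_le_div_iff₀ hdfac (pow_pos hd0 d)]
        calc 1 * (d:ℝ)^d = (d:ℝ)^d := one_mul _
          _ ≤ e1^d * d.factorial := by rw [he1def]; exact SJL_pow_le_exp_factorial d
      have hmupow : mu^d = e1^d * q^d / ((d:ℝ)^d * v^(2*d)) := by
        rw [hmu, div_pow, mul_pow, mul_pow, ← pow_mul]
      have hstep1 : (d:ℝ)^(2*T)/(d.factorial:ℝ) * q^d * v^(2*(T-d))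
          ≤ (d:ℝ)^(2*T) * v^(2*T) * mu^d := by
        have heq : (d:ℝ)^(2*T) * q^d * v^(2*(T-d)) * (e1^d/(d:ℝ)^d)
            = (d:ℝ)^(2*T) * v^(2*T) * mu^d := by
          rw [hmupow, show 2*T = 2*(T-d) + 2*d from by omega, pow_add, pow_add]
          field_simp
        calc (d:ℝ)^(2*T)/(d.factorial:ℝ) * q^d * v^(2*(T-d))
            = (d:ℝ)^(2*T) * q^d * v^(2*(T-d)) * (1/(d.factorial:ℝ)) := by ring
          _ ≤ (d:ℝ)^(2*T) * q^d * v^(2*(T-d)) * (e1^d/(d:ℝ)^d) := by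
              refine mul_le_mul_of_nonneg_left hfrac ?_
              exact mul_nonneg (mul_nonneg (pow_nonneg hd0.le _) (pow_nonneg hs1.le _))
                (pow_nonneg hv.le _)
          _ = (d:ℝ)^(2*T) * v^(2*T) * mu^d := heq
      rcases le_or_gt 1 mu with hmu1 | hmu1
      · -- big mu
        have h1 : mu^d ≤ mu^T := pow_le_pow_right₀ hmu1 hdT
        have hbase : (d:ℝ)^2 * v^2 * mu ≤ B := by
          have hmuval : (d:ℝ)^2 * v^2 * mu = (d:ℝ) * e1 * q := by
            rw [hmu]; field_simp
          have hf1 : f 1 = (T:ℝ)^2 * lam := by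
            rw [hf]; norm_num
          have hv2f1 : v^2 * f 1 = (T:ℝ) * q := by
            rw [hf1, hql]; ring
          calc (d:ℝ)^2*v^2*mu = (d:ℝ)*e1*q := hmuval
            _ ≤ (T:ℝ)*e1*q := by
                refine mul_le_mul_of_nonneg_right
                  (mul_le_mul_of_nonneg_right ?_ he0.le) hs1.le
                exact_mod_cast hdT
            _ = e1 * (v^2 * f 1) := by rw [hv2f1]; ring
            _ ≤ e1 * (v^2 * Q) := by
                refine mul_le_mul_of_nonneg_left ?_ he0.le
                exact mul_le_mul_of_nonneg_left (hmemQ 1 le_rfl hT2) (sq_nonneg v)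
            _ ≤ B := by
                rw [hB]
                have h := mul_nonneg he0.le (mul_nonneg (sq_nonneg v) hQ0)
                nlinarith
        calc (d:ℝ)^(2*T)/(d.factorial:ℝ) * q^d * v^(2*(T-d))
            ≤ (d:ℝ)^(2*T) * v^(2*T) * mu^d := hstep1
          _ ≤ (d:ℝ)^(2*T) * v^(2*T) * mu^T := by
              refine mul_le_mul_of_nonneg_left h1 ?_
              exact mul_nonneg (pow_nonneg hd0.le _) (pow_nonneg hv.le _)
          _ = ((d:ℝ)^2*v^2*mu)^T := by
              rw [mul_pow, mul_pow, ← pow_mul, ← pow_mul]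
          _ ≤ B^T := by
              refine pow_le_pow_left₀ ?_ hbase T
              exact mul_nonneg (mul_nonneg (sq_nonneg _) (sq_nonneg v)) hmu0.le
      · -- small mu
        obtain ⟨t, r, htr, hrd⟩ : ∃ t r, d * t + r = T + d - 1 ∧ r < d :=
          ⟨(T+d-1)/d, (T+d-1)%d, Nat.div_add_mod _ _, Nat.mod_lt _ (by omega)⟩
        have hTdt : T ≤ d * t := by omega
        have hcomm : t * d = d * t := Nat.mul_comm t d
        have htd2T : t * d ≤ 2 * T := by omega
        have ht1 : 1 ≤ t := by
          rcases Nat.eq_zero_or_pos t with h | h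
          · subst h; simp at htr; omega
          · exact h
        have htu : t ≤ u := by
          by_contra hlt
          push_neg at hlt
          have h3 : d * (u+1) ≤ d * t := Nat.mul_le_mul_left d hlt
          have h4 : d * (u+1) = d*u + d := by ring
          have h5 : 2*u ≤ d*u := Nat.mul_le_mul_right u hd2
          omega
        have htT2 : t ≤ T/2 := by omega
        have htp : (0:ℝ) < (t:ℝ) := by exact_mod_cast ht1
        have hTdt' : (T:ℝ) ≤ (d:ℝ) * t := by exact_mod_cast hTdt
        have htd2T' : (t:ℝ) * (d:ℝ) ≤ 2*(T:ℝ) := by exact_mod_cast htd2T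
        have hd2Tt : (d:ℝ) ≤ 2*(T:ℝ)/(t:ℝ) := by
          rw [le_div_iff₀ htp]; linarith
        have hmulam : mu ≤ e1 * (t:ℝ) * lam := by
          have hmuval2 : mu = e1 * lam * (T:ℝ) / (d:ℝ) := by
            rw [hmu, hql]; field_simp
          rw [hmuval2, div_le_iff₀ hd0]
          calc e1*lam*(T:ℝ) ≤ e1*lam*((d:ℝ)*t) :=
                mul_le_mul_of_nonneg_left hTdt' (mul_nonneg he0.le hlamp.le)
            _ = e1*(t:ℝ)*lam*(d:ℝ) := by ring
        have hct : (t:ℝ)^((1:ℝ)/t) ≤ 2 := by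
          have h2t : (t:ℝ) ≤ (2:ℝ)^(t:ℕ) := by
            exact_mod_cast (Nat.lt_two_pow_self (n := t)).le
          calc (t:ℝ)^((1:ℝ)/t) ≤ ((2:ℝ)^(t:ℕ))^((1:ℝ)/t) :=
                Real.rpow_le_rpow htp.le h2t (by positivity)
            _ = (2:ℝ)^((t:ℝ)*((1:ℝ)/t)) := by
                rw [← Real.rpow_natCast 2 t, ← Real.rpow_mul (by norm_num : (0:ℝ) ≤ 2)]
            _ = 2 := by
                rw [mul_one_div, div_self (ne_of_gt htp), Real.rpow_one]
        have hce : e1^((1:ℝ)/t) ≤ e1 := by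
          have h1t : (1:ℝ)/t ≤ 1 := by
            rw [div_le_one htp]; exact_mod_cast ht1
          calc e1^((1:ℝ)/t) ≤ e1^(1:ℝ) := Real.rpow_le_rpow_of_exponent_le he1 h1t
            _ = e1 := Real.rpow_one e1
        have haux : (0:ℝ) ≤ 2*e1*lam^((1:ℝ)/t) :=
          mul_nonneg (mul_nonneg (by norm_num) he0.le) (Real.rpow_nonneg hlamp.le _)
        have hbase : mu^((1:ℝ)/t) ≤ 2*e1*lam^((1:ℝ)/t) := by
          calc mu^((1:ℝ)/t) ≤ (e1*(t:ℝ)*lam)^((1:ℝ)/t) :=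
                Real.rpow_le_rpow hmu0.le hmulam (by positivity)
            _ = e1^((1:ℝ)/t) * (t:ℝ)^((1:ℝ)/t) * lam^((1:ℝ)/t) := by
                rw [Real.mul_rpow (mul_nonneg he0.le htp.le) hlamp.le,
                  Real.mul_rpow he0.le htp.le]
            _ ≤ (e1 * 2) * lam^((1:ℝ)/t) := by
                refine mul_le_mul_of_nonneg_right ?_ (Real.rpow_nonneg hlamp.le _)
                exact mul_le_mul hce hct (Real.rpow_nonneg htp.le _) he0.le
            _ = 2*e1*lam^((1:ℝ)/t) := by ring
        have hmud : mu^d ≤ (2*e1*lam^((1:ℝ)/t))^T := by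
          have hTr : ((1:ℝ)/t)*(T:ℝ) ≤ (d:ℝ) := by
            rw [div_mul_eq_mul_div, one_mul, div_le_iff₀ htp]
            linarith
          calc mu^d = mu^((d:ℕ):ℝ) := (Real.rpow_natCast mu d).symm
            _ ≤ mu^(((1:ℝ)/t)*(T:ℝ)) :=
                Real.rpow_le_rpow_of_exponent_ge hmu0 hmu1.le hTr
            _ = (mu^((1:ℝ)/t))^((T:ℕ):ℝ) := by rw [← Real.rpow_mul hmu0.le]
            _ = (mu^((1:ℝ)/t))^T := by rw [Real.rpow_natCast]
            _ ≤ (2*e1*lam^((1:ℝ)/t))^T :=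
                pow_le_pow_left₀ (Real.rpow_nonneg hmu0.le _) hbase T
        calc (d:ℝ)^(2*T)/(d.factorial:ℝ) * q^d * v^(2*(T-d))
            ≤ (d:ℝ)^(2*T) * v^(2*T) * mu^d := hstep1
          _ = ((d:ℝ)^2 * v^2)^T * mu^d := by
              rw [mul_pow, ← pow_mul, ← pow_mul]
          _ ≤ ((d:ℝ)^2 * v^2)^T * (2*e1*lam^((1:ℝ)/t))^T := by
              refine mul_le_mul_of_nonneg_left hmud ?_
              exact pow_nonneg (mul_nonneg (sq_nonneg _) (sq_nonneg v)) T
          _ = ((d:ℝ)^2 * v^2 * (2*e1*lam^((1:ℝ)/t)))^T := by rw [← mul_pow]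
          _ ≤ ((2*(T:ℝ)/(t:ℝ))^2 * v^2 * (2*e1*lam^((1:ℝ)/t)))^T := by
              refine pow_le_pow_left₀ ?_ ?_ T
              · exact mul_nonneg (mul_nonneg (sq_nonneg _) (sq_nonneg v)) haux
              · refine mul_le_mul_of_nonneg_right ?_ haux
                refine mul_le_mul_of_nonneg_right ?_ (sq_nonneg v)
                exact pow_le_pow_left₀ hd0.le hd2Tt 2
          _ = (8*e1*(v^2 * f t))^T := by
              congr 1
              rw [hf]
              have htne : (t:ℝ) ≠ 0 := ne_of_gt htp
              field_simp
              ring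
          _ ≤ B^T := by
              refine pow_le_pow_left₀ ?_ ?_ T
              · exact mul_nonneg (mul_nonneg (by norm_num) he0.le)
                  (mul_nonneg (sq_nonneg v) (hf0 t))
              · rw [hB]
                refine mul_le_mul_of_nonneg_left ?_
                  (mul_nonneg (by norm_num) he0.le)
                exact mul_le_mul_of_nonneg_left (hmemQ t ht1 htT2) (sq_nonneg v)
  calc ∑ d ∈ Finset.Icc 2 T, (d:ℝ)^(2*T)/(d.factorial : ℝ) * q^d * v^(2*(T-d))
      ≤ ∑ d ∈ Finset.Icc 2 T, B ^ T := Finset.sum_le_sum hKd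
    _ = ((Finset.Icc 2 T).card : ℝ) * B ^ T := by rw [Finset.sum_const, nsmul_eq_mul]
    _ ≤ (T:ℝ) * B ^ T := by
        refine mul_le_mul_of_nonneg_right ?_ (pow_nonneg hB0 T)
        rw [Nat.card_Icc]
        exact_mod_cast (show T + 1 - 2 ≤ T by omega)
    _ ≤ (2:ℝ)^T * B ^ T := by
        refine mul_le_mul_of_nonneg_right ?_ (pow_nonneg hB0 T)
        calc (T:ℝ) ≤ ((2^T : ℕ):ℝ) := by exact_mod_cast (Nat.lt_two_pow_self (n := T)).le
          _ = (2:ℝ)^T := by push_cast; ring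
    _ = (2 * B) ^ T := (mul_pow 2 B T).symm
    _ = (16 * e1 * (v^2 * Q)) ^ T := by
        rw [show (16:ℝ) * e1 * (v^2 * Q) = 2 * B from by rw [hB]; ring]
    _ = (16 * Real.exp 1 * (v^2 * Q)) ^ T := by rw [he1def]

end Analytic

section Core
variable {Ω : Type*} [MeasurableSpace Ω] {μ : Measure Ω}

lemma SJL_core [IsProbabilityMeasure μ]
    {n : ℕ} (a b : Fin n → Ω → ℝ) (x : Fin n → ℝ) (v q : ℝ) (T : ℕ)
    (hT : 0 < T) (hv : 0 ≤ v) (hq : 0 ≤ q)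
    (ha_meas : ∀ i, Measurable (a i)) (hb_meas : ∀ i, Measurable (b i))
    (ha_bool : ∀ i ω, a i ω = 0 ∨ a i ω = 1)
    (hb_pm : ∀ i, ∀ᵐ ω ∂μ, b i ω = 1 ∨ b i ω = -1)
    (ha_prod : ∀ D : Finset (Fin n), ∫ ω, ∏ i ∈ D, a i ω ∂μ = q ^ D.card)
    (hb_zero : ∀ E : Finset (Fin n), E.Nonempty → ∫ ω, ∏ i ∈ E, b i ω ∂μ = 0)
    (hab : ∀ D E : Finset (Fin n),
      IndepFun (fun ω => ∏ i ∈ D, a i ω) (fun ω => ∏ i ∈ E, b i ω) μ)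
    (hxv : ∀ i, |x i| ≤ v) (hx2 : ∑ i, x i ^ 2 ≤ 1) :
    ∫ ω, (∑ i, ∑ j, if i ≠ j then a i ω * a j ω * b i ω * b j ω * x i * x j else 0) ^ T ∂μ
      ≤ ∑ d ∈ Finset.Icc 2 T, (d:ℝ)^(2*T)/(d.factorial : ℝ) * q^d * v^(2*(T-d)) := by
  classical
  set P : Finset (Fin n × Fin n) :=
    (Finset.univ ×ˢ Finset.univ).filter (fun p : Fin n × Fin n => p.1 ≠ p.2) with hP
  set Y : Fin n × Fin n → Ω → ℝ :=
    fun p ω => a p.1 ω * a p.2 ω * b p.1 ω * b p.2 ω with hY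
  -- Step A : rewrite Z
  have hZ : ∀ ω, (∑ i, ∑ j, if i ≠ j then a i ω * a j ω * b i ω * b j ω * x i * x j else 0)
      = ∑ p ∈ P, (x p.1 * x p.2) * Y p ω := by
    intro ω
    calc (∑ i, ∑ j, if i ≠ j then a i ω * a j ω * b i ω * b j ω * x i * x j else 0)
        = ∑ p ∈ Finset.univ ×ˢ Finset.univ, (if p.1 ≠ p.2 then
            a p.1 ω * a p.2 ω * b p.1 ω * b p.2 ω * x p.1 * x p.2 else 0) :=
          (Finset.sum_product' ..).symm
      _ = ∑ p ∈ P, (a p.1 ω * a p.2 ω * b p.1 ω * b p.2 ω * x p.1 * x p.2) :=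
          (Finset.sum_filter _ _).symm
      _ = ∑ p ∈ P, (x p.1 * x p.2) * Y p ω := by
          refine Finset.sum_congr rfl fun p _ => ?_
          rw [hY]; ring
  -- Step B : multinomial expansion
  have hpow : ∀ ω, (∑ p ∈ P, (x p.1 * x p.2) * Y p ω) ^ T
      = ∑ g ∈ Fintype.piFinset (fun _ : Fin T => P),
          (∏ k, (x (g k).1 * x (g k).2)) * ∏ k, Y (g k) ω := by
    intro ω
    have h1 : (∑ p ∈ P, (x p.1 * x p.2) * Y p ω)^T
        = ∏ _k : Fin T, (∑ p ∈ P, (x p.1 * x p.2) * Y p ω) := by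
      rw [Finset.prod_const, Finset.card_univ, Fintype.card_fin]
    rw [h1, Finset.prod_univ_sum]
    exact Finset.sum_congr rfl fun g _ => Finset.prod_mul_distrib
  -- Step C : facts about Y
  have hYmeas : ∀ p : Fin n × Fin n, Measurable (Y p) := fun p =>
    (((ha_meas p.1).mul (ha_meas p.2)).mul (hb_meas p.1)).mul (hb_meas p.2)
  have haabs : ∀ i ω, |a i ω| ≤ 1 := by
    intro i ω; rcases ha_bool i ω with h | h <;> rw [h] <;> norm_num
  have hYbdd : ∀ p : Fin n × Fin n, ∀ᵐ ω ∂μ, |Y p ω| ≤ 1 := by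
    intro p
    filter_upwards [hb_pm p.1, hb_pm p.2] with ω h1 h2
    have hb1 : |b p.1 ω| ≤ 1 := by rcases h1 with h | h <;> rw [h] <;> norm_num
    have hb2 : |b p.2 ω| ≤ 1 := by rcases h2 with h | h <;> rw [h] <;> norm_num
    have : |Y p ω| = |a p.1 ω| * |a p.2 ω| * |b p.1 ω| * |b p.2 ω| := by
      rw [hY, abs_mul, abs_mul, abs_mul]
    rw [this]
    exact mul_le_one₀ (mul_le_one₀ (mul_le_one₀ (haabs p.1 ω) (abs_nonneg _)
      (haabs p.2 ω)) (abs_nonneg _) hb1) (abs_nonneg _) hb2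
  have hprodY_meas : ∀ g : Fin T → Fin n × Fin n,
      Measurable (fun ω => ∏ k, Y (g k) ω) := fun g =>
    Finset.measurable_prod _ (fun k _ => hYmeas (g k))
  have hprodY_int : ∀ g : Fin T → Fin n × Fin n,
      Integrable (fun ω => ∏ k, Y (g k) ω) μ := fun g =>
    SJL_integrable_of_bdd (hprodY_meas g)
      (SJL_prod_ae_bdd (fun k => Y (g k)) (fun k => hYbdd (g k)) Finset.univ)
  -- Step D : expand integral
  have hEZ : ∫ ω, (∑ i, ∑ j, if i ≠ j then
        a i ω * a j ω * b i ω * b j ω * x i * x j else 0) ^ T ∂μ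
      = ∑ g ∈ Fintype.piFinset (fun _ : Fin T => P),
          (∏ k, (x (g k).1 * x (g k).2)) * ∫ ω, ∏ k, Y (g k) ω ∂μ := by
    calc ∫ ω, (∑ i, ∑ j, if i ≠ j then
          a i ω * a j ω * b i ω * b j ω * x i * x j else 0) ^ T ∂μ
        = ∫ ω, ∑ g ∈ Fintype.piFinset (fun _ : Fin T => P),
            (∏ k, (x (g k).1 * x (g k).2)) * ∏ k, Y (g k) ω ∂μ := by
          refine integral_congr_ae (Filter.Eventually.of_forall fun ω => ?_)
          dsimp only
          rw [hZ ω, hpow ω]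
      _ = ∑ g ∈ Fintype.piFinset (fun _ : Fin T => P),
            ∫ ω, (∏ k, (x (g k).1 * x (g k).2)) * ∏ k, Y (g k) ω ∂μ :=
          integral_finset_sum _ (fun g _ => (hprodY_int g).const_mul _)
      _ = ∑ g ∈ Fintype.piFinset (fun _ : Fin T => P),
            (∏ k, (x (g k).1 * x (g k).2)) * ∫ ω, ∏ k, Y (g k) ω ∂μ :=
          Finset.sum_congr rfl fun g _ => integral_const_mul _ _
  -- Step E : evaluate the per-g integral
  set Dg : (Fin T → Fin n × Fin n) → Finset (Fin n) :=
    fun g => Finset.univ.filter (fun i => SJLcnt g i ≠ 0) with hDg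
  set Og : (Fin T → Fin n × Fin n) → Finset (Fin n) :=
    fun g => Finset.univ.filter (fun i => Odd (SJLcnt g i)) with hOg
  have hfact : ∀ g : Fin T → Fin n × Fin n, (fun ω => ∏ k, Y (g k) ω)
      =ᵐ[μ] fun ω => (∏ i ∈ Dg g, a i ω) * (∏ i ∈ Og g, b i ω) := by
    intro g
    have hball : ∀ᵐ ω ∂μ, ∀ i, b i ω = 1 ∨ b i ω = -1 := ae_all_iff.2 hb_pm
    filter_upwards [hball] with ω hbω
    have e1 : ∏ k, Y (g k) ω
        = ∏ k, ((a (g k).1 ω * b (g k).1 ω) * (a (g k).2 ω * b (g k).2 ω)) :=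
      Finset.prod_congr rfl fun k _ => by rw [hY]; ring
    have e2 : ∏ k, ((a (g k).1 ω * b (g k).1 ω) * (a (g k).2 ω * b (g k).2 ω))
        = ∏ i, (a i ω * b i ω) ^ SJLcnt g i := SJL_prod_idx g (fun i => a i ω * b i ω)
    have e3 : ∏ i, (a i ω * b i ω) ^ SJLcnt g i
        = (∏ i, (a i ω) ^ SJLcnt g i) * ∏ i, (b i ω) ^ SJLcnt g i := by
      rw [← Finset.prod_mul_distrib]
      exact Finset.prod_congr rfl fun i _ => mul_pow _ _ _
    have e4 : ∏ i, (a i ω) ^ SJLcnt g i = ∏ i ∈ Dg g, a i ω := by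
      rw [hDg]
      rw [← Finset.prod_filter_mul_prod_filter_not Finset.univ
        (fun i => SJLcnt g i ≠ 0) (fun i => (a i ω) ^ SJLcnt g i)]
      have h5 : ∏ i ∈ Finset.univ.filter (fun i => ¬ SJLcnt g i ≠ 0),
          (a i ω) ^ SJLcnt g i = 1 := by
        refine Finset.prod_eq_one fun i hi => ?_
        have hz : SJLcnt g i = 0 := by simpa using (Finset.mem_filter.1 hi).2
        rw [hz, pow_zero]
      rw [h5, mul_one]
      refine Finset.prod_congr rfl fun i hi => ?_
      have hc : SJLcnt g i ≠ 0 := (Finset.mem_filter.1 hi).2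
      rcases ha_bool i ω with h | h
      · rw [h, zero_pow hc]
      · rw [h, one_pow]
    have e5 : ∏ i, (b i ω) ^ SJLcnt g i = ∏ i ∈ Og g, b i ω := by
      rw [hOg]
      rw [← Finset.prod_filter_mul_prod_filter_not Finset.univ
        (fun i => Odd (SJLcnt g i)) (fun i => (b i ω) ^ SJLcnt g i)]
      have h6 : ∏ i ∈ Finset.univ.filter (fun i => ¬ Odd (SJLcnt g i)),
          (b i ω) ^ SJLcnt g i = 1 := by
        refine Finset.prod_eq_one fun i hi => ?_
        have hev : Even (SJLcnt g i) :=
          Nat.not_odd_iff_even.1 (by simpa using (Finset.mem_filter.1 hi).2)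
        rcases hbω i with h | h
        · rw [h, one_pow]
        · rw [h]; exact hev.neg_one_pow
      rw [h6, mul_one]
      refine Finset.prod_congr rfl fun i hi => ?_
      have hodd : Odd (SJLcnt g i) := (Finset.mem_filter.1 hi).2
      rcases hbω i with h | h
      · rw [h, one_pow]
      · rw [h]; exact hodd.neg_one_pow
    rw [e1, e2, e3, e4, e5]
  have haprod_meas : ∀ D : Finset (Fin n), Measurable (fun ω => ∏ i ∈ D, a i ω) :=
    fun D => Finset.measurable_prod _ fun i _ => ha_meas i
  have hbprod_meas : ∀ E : Finset (Fin n), Measurable (fun ω => ∏ i ∈ E, b i ω) :=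
    fun E => Finset.measurable_prod _ fun i _ => hb_meas i
  have haprod_int : ∀ D : Finset (Fin n), Integrable (fun ω => ∏ i ∈ D, a i ω) μ :=
    fun D => SJL_integrable_of_bdd (haprod_meas D)
      (SJL_prod_ae_bdd a (fun i => Filter.Eventually.of_forall (haabs i)) D)
  have hbprod_int : ∀ E : Finset (Fin n), Integrable (fun ω => ∏ i ∈ E, b i ω) μ :=
    fun E => SJL_integrable_of_bdd (hbprod_meas E)
      (SJL_prod_ae_bdd b (fun i => by
        filter_upwards [hb_pm i] with ω h
        rcases h with h | h <;> rw [h] <;> norm_num) E)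
  have hIg : ∀ g : Fin T → Fin n × Fin n,
      ∫ ω, ∏ k, Y (g k) ω ∂μ = q ^ (Dg g).card * ∫ ω, ∏ i ∈ Og g, b i ω ∂μ := by
    intro g
    rw [integral_congr_ae (hfact g)]
    have h := (hab (Dg g) (Og g)).integral_mul_eq_mul_integral (haprod_int _).aestronglyMeasurable (hbprod_int _).aestronglyMeasurable
    calc ∫ ω, (∏ i ∈ Dg g, a i ω) * (∏ i ∈ Og g, b i ω) ∂μ
        = (∫ ω, ∏ i ∈ Dg g, a i ω ∂μ) * ∫ ω, ∏ i ∈ Og g, b i ω ∂μ := h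
      _ = q ^ (Dg g).card * ∫ ω, ∏ i ∈ Og g, b i ω ∂μ := by rw [ha_prod]
  have hIg0 : ∀ g : Fin T → Fin n × Fin n, ¬ (∀ i, Even (SJLcnt g i)) →
      ∫ ω, ∏ k, Y (g k) ω ∂μ = 0 := by
    intro g hg
    rw [hIg g]
    have hne : (Og g).Nonempty := by
      push_neg at hg
      obtain ⟨i, hi⟩ := hg
      exact ⟨i, by
        rw [hOg]
        exact Finset.mem_filter.2 ⟨Finset.mem_univ _, (Nat.not_even_iff_odd.1 hi)⟩⟩
    rw [hb_zero _ hne, mul_zero]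
  have hIgE : ∀ g : Fin T → Fin n × Fin n, (∀ i, Even (SJLcnt g i)) →
      ∫ ω, ∏ k, Y (g k) ω ∂μ = q ^ (Dg g).card := by
    intro g hg
    rw [hIg g]
    have hemp : Og g = ∅ := by
      rw [hOg]
      exact Finset.filter_eq_empty_iff.2 fun i _ => Nat.not_odd_iff_even.2 (hg i)
    rw [hemp]
    simp
  -- Step F : restrict to even g
  set G : Finset (Fin T → Fin n × Fin n) :=
    (Fintype.piFinset (fun _ : Fin T => P)).filter
      (fun g => ∀ i, Even (SJLcnt g i)) with hG
  have hsum2 : ∑ g ∈ Fintype.piFinset (fun _ : Fin T => P),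
        (∏ k, (x (g k).1 * x (g k).2)) * ∫ ω, ∏ k, Y (g k) ω ∂μ
      = ∑ g ∈ G, (∏ k, (x (g k).1 * x (g k).2)) * q ^ (Dg g).card := by
    calc ∑ g ∈ Fintype.piFinset (fun _ : Fin T => P),
          (∏ k, (x (g k).1 * x (g k).2)) * ∫ ω, ∏ k, Y (g k) ω ∂μ
        = ∑ g ∈ Fintype.piFinset (fun _ : Fin T => P),
            (if (∀ i, Even (SJLcnt g i)) then
              (∏ k, (x (g k).1 * x (g k).2)) * q ^ (Dg g).card else 0) := by
          refine Finset.sum_congr rfl fun g _ => ?_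
          by_cases h : ∀ i, Even (SJLcnt g i)
          · rw [if_pos h, hIgE g h]
          · rw [if_neg h, hIg0 g h, mul_zero]
      _ = ∑ g ∈ G, (∏ k, (x (g k).1 * x (g k).2)) * q ^ (Dg g).card := by
          rw [hG, Finset.sum_filter]
  -- Step G : per-g bound
  have hgfacts : ∀ g ∈ G, 2 ≤ (Dg g).card ∧ (Dg g).card ≤ T ∧
      (∏ k, (x (g k).1 * x (g k).2)) * q ^ (Dg g).card
        ≤ q ^ (Dg g).card * (v ^ (2*(T - (Dg g).card)) * ∏ i ∈ Dg g, (x i)^2) := by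
    intro g hg
    rw [hG, Finset.mem_filter] at hg
    obtain ⟨hgP, hgEv⟩ := hg
    have hgP' : ∀ k, (g k).1 ≠ (g k).2 := by
      intro k
      have hk := Fintype.mem_piFinset.1 hgP k
      rw [hP, Finset.mem_filter] at hk
      exact hk.2
    have hcnt2 : ∀ i ∈ Dg g, 2 ≤ SJLcnt g i := by
      intro i hi
      have hne : SJLcnt g i ≠ 0 := by
        rw [hDg, Finset.mem_filter] at hi; exact hi.2
      obtain ⟨c, hc⟩ := hgEv i
      omega
    have hsumD : ∑ i ∈ Dg g, SJLcnt g i = 2*T := by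
      rw [hDg, Finset.sum_filter_of_ne (fun i _ h => h)]
      exact SJL_cnt_sum g
    have hcard2 : 2 ≤ (Dg g).card := by
      have k0 : Fin T := ⟨0, hT⟩
      have hi1 : (g k0).1 ∈ Dg g := by
        rw [hDg]; exact Finset.mem_filter.2 ⟨Finset.mem_univ _, SJL_cnt_fst_ne g k0⟩
      have hi2 : (g k0).2 ∈ Dg g := by
        rw [hDg]; exact Finset.mem_filter.2 ⟨Finset.mem_univ _, SJL_cnt_snd_ne g k0⟩
      have h12 := Finset.one_lt_card.2 ⟨_, hi1, _, hi2, hgP' k0⟩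
      omega
    have hcardT : (Dg g).card ≤ T := by
      have h1 : ∑ i ∈ Dg g, 2 ≤ ∑ i ∈ Dg g, SJLcnt g i := Finset.sum_le_sum hcnt2
      rw [Finset.sum_const, smul_eq_mul] at h1
      omega
    refine ⟨hcard2, hcardT, ?_⟩
    have hW : (∏ k, (x (g k).1 * x (g k).2)) = ∏ i, (x i) ^ SJLcnt g i :=
      SJL_prod_idx g x
    have hWle : (∏ k, (x (g k).1 * x (g k).2))
        ≤ v ^ (2*(T - (Dg g).card)) * ∏ i ∈ Dg g, (x i)^2 := by
      calc (∏ k, (x (g k).1 * x (g k).2)) ≤ |∏ k, (x (g k).1 * x (g k).2)| :=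
            le_abs_self _
        _ = ∏ i, |x i| ^ SJLcnt g i := by
            rw [hW, Finset.abs_prod]
            exact Finset.prod_congr rfl fun i _ => abs_pow _ _
        _ = ∏ i ∈ Dg g, |x i| ^ SJLcnt g i := by
            rw [hDg]
            refine (Finset.prod_filter_of_ne fun i _ hne => ?_).symm
            intro h0
            exact hne (by rw [h0, pow_zero])
        _ ≤ ∏ i ∈ Dg g, (v ^ (SJLcnt g i - 2) * (x i)^2) := by
            refine Finset.prod_le_prod (fun i _ => pow_nonneg (abs_nonneg _) _) ?_
            intro i hi
            have h2c := hcnt2 i hi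
            have hsplit : |x i| ^ SJLcnt g i = |x i| ^ (SJLcnt g i - 2) * |x i|^2 := by
              rw [← pow_add]
              congr 1
              omega
            rw [hsplit, sq_abs]
            exact mul_le_mul_of_nonneg_right
              (pow_le_pow_left₀ (abs_nonneg _) (hxv i) _) (sq_nonneg _)
        _ = v ^ (2*(T - (Dg g).card)) * ∏ i ∈ Dg g, (x i)^2 := by
            rw [Finset.prod_mul_distrib, Finset.prod_pow_eq_pow_sum]
            congr 2
            have hsplit2 : ∑ i ∈ Dg g, ((SJLcnt g i - 2) + 2)
                = ∑ i ∈ Dg g, SJLcnt g i :=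
              Finset.sum_congr rfl fun i hi => by have := hcnt2 i hi; omega
            rw [Finset.sum_add_distrib, Finset.sum_const, smul_eq_mul] at hsplit2
            omega
    calc (∏ k, (x (g k).1 * x (g k).2)) * q ^ (Dg g).card
        ≤ (v ^ (2*(T - (Dg g).card)) * ∏ i ∈ Dg g, (x i)^2) * q ^ (Dg g).card :=
          mul_le_mul_of_nonneg_right hWle (pow_nonneg hq _)
      _ = q ^ (Dg g).card * (v ^ (2*(T - (Dg g).card)) * ∏ i ∈ Dg g, (x i)^2) := by
          ring
  -- Step H : grouping by d and counting
  have hmaps : ∀ g ∈ G, (Dg g).card ∈ Finset.Icc 2 T := fun g hg =>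
    Finset.mem_Icc.2 ⟨(hgfacts g hg).1, (hgfacts g hg).2.1⟩
  have hcount : ∀ d ∈ Finset.Icc 2 T,
      ∑ g ∈ G.filter (fun g => (Dg g).card = d), ∏ i ∈ Dg g, (x i)^2
        ≤ (d:ℝ)^(2*T) / (d.factorial : ℝ) := by
    intro d hd
    have hdfac : (0:ℝ) < (d.factorial : ℝ) := by exact_mod_cast d.factorial_pos
    have hmaps2 : ∀ g ∈ G.filter (fun g => (Dg g).card = d),
        Dg g ∈ Finset.powersetCard d Finset.univ := by
      intro g hg
      rw [Finset.mem_filter] at hg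
      exact Finset.mem_powersetCard.2 ⟨Finset.subset_univ _, hg.2⟩
    rw [← Finset.sum_fiberwise_of_maps_to hmaps2 (fun g => ∏ i ∈ Dg g, (x i)^2)]
    have hinner : ∀ D ∈ Finset.powersetCard d Finset.univ,
        ∑ g ∈ (G.filter (fun g => (Dg g).card = d)).filter (fun g => Dg g = D),
          ∏ i ∈ Dg g, (x i)^2 ≤ (d:ℝ)^(2*T) * ∏ i ∈ D, (x i)^2 := by
      intro D hD
      have hDcard : D.card = d := (Finset.mem_powersetCard.1 hD).2
      have hsub : (G.filter (fun g => (Dg g).card = d)).filter (fun g => Dg g = D)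
          ⊆ Fintype.piFinset (fun _ : Fin T => D ×ˢ D) := by
        intro g hg
        rw [Finset.mem_filter] at hg
        obtain ⟨_, hgD⟩ := hg
        refine Fintype.mem_piFinset.2 fun k => ?_
        rw [Finset.mem_product]
        constructor
        · rw [← hgD, hDg]
          exact Finset.mem_filter.2 ⟨Finset.mem_univ _, SJL_cnt_fst_ne g k⟩
        · rw [← hgD, hDg]
          exact Finset.mem_filter.2 ⟨Finset.mem_univ _, SJL_cnt_snd_ne g k⟩
      have hcard : ((G.filter (fun g => (Dg g).card = d)).filter
          (fun g => Dg g = D)).card ≤ d^(2*T) := by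
        calc ((G.filter (fun g => (Dg g).card = d)).filter
              (fun g => Dg g = D)).card
            ≤ (Fintype.piFinset (fun _ : Fin T => D ×ˢ D)).card :=
              Finset.card_le_card hsub
          _ = (d*d)^T := by
              rw [Fintype.card_piFinset]
              simp [Finset.card_product, hDcard]
          _ = d^(2*T) := by rw [← pow_two, ← pow_mul]
      calc ∑ g ∈ (G.filter (fun g => (Dg g).card = d)).filter (fun g => Dg g = D),
            ∏ i ∈ Dg g, (x i)^2
          = ∑ _g ∈ (G.filter (fun g => (Dg g).card = d)).filter (fun g => Dg g = D),
              ∏ i ∈ D, (x i)^2 := by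
            refine Finset.sum_congr rfl fun g hg => ?_
            rw [(Finset.mem_filter.1 hg).2]
        _ = (((G.filter (fun g => (Dg g).card = d)).filter
              (fun g => Dg g = D)).card : ℝ) * ∏ i ∈ D, (x i)^2 := by
            rw [Finset.sum_const, nsmul_eq_mul]
        _ ≤ ((d:ℝ))^(2*T) * ∏ i ∈ D, (x i)^2 := by
            refine mul_le_mul_of_nonneg_right ?_
              (Finset.prod_nonneg fun i _ => sq_nonneg _)
            calc (((G.filter (fun g => (Dg g).card = d)).filter
                  (fun g => Dg g = D)).card : ℝ)
                ≤ ((d^(2*T) : ℕ) : ℝ) := by exact_mod_cast hcard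
              _ = ((d:ℝ))^(2*T) := by push_cast; ring
    calc ∑ D ∈ Finset.powersetCard d Finset.univ,
          ∑ g ∈ (G.filter (fun g => (Dg g).card = d)).filter (fun g => Dg g = D),
            ∏ i ∈ Dg g, (x i)^2
        ≤ ∑ D ∈ Finset.powersetCard d Finset.univ,
            (d:ℝ)^(2*T) * ∏ i ∈ D, (x i)^2 := Finset.sum_le_sum hinner
      _ = (d:ℝ)^(2*T) * ∑ D ∈ Finset.powersetCard d Finset.univ,
            ∏ i ∈ D, (x i)^2 := by rw [Finset.mul_sum]
      _ ≤ (d:ℝ)^(2*T) * (1/(d.factorial:ℝ)) := by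
          refine mul_le_mul_of_nonneg_left ?_ (by positivity)
          have h := SJL_esymm_le (fun i => (x i)^2) (fun i => sq_nonneg _) d
          have hle1 : (∑ i, (x i)^2) ^ d ≤ 1 :=
            pow_le_one₀ (Finset.sum_nonneg fun i _ => sq_nonneg _) hx2
          rw [le_div_iff₀ hdfac]
          calc (∑ D ∈ Finset.powersetCard d Finset.univ, ∏ i ∈ D, (x i)^2)
                * (d.factorial : ℝ)
              = (d.factorial : ℝ) * ∑ D ∈ Finset.powersetCard d Finset.univ,
                  ∏ i ∈ D, (x i)^2 := by ring
            _ ≤ (∑ i, (x i)^2) ^ d := h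
            _ ≤ 1 := hle1
      _ = (d:ℝ)^(2*T)/(d.factorial:ℝ) := by ring
  -- final assembly
  rw [hEZ, hsum2]
  calc ∑ g ∈ G, (∏ k, (x (g k).1 * x (g k).2)) * q ^ (Dg g).card
      ≤ ∑ g ∈ G, q ^ (Dg g).card * (v ^ (2*(T - (Dg g).card)) * ∏ i ∈ Dg g, (x i)^2) :=
        Finset.sum_le_sum fun g hg => (hgfacts g hg).2.2
    _ = ∑ d ∈ Finset.Icc 2 T, ∑ g ∈ G.filter (fun g => (Dg g).card = d),
          q ^ (Dg g).card * (v ^ (2*(T - (Dg g).card)) * ∏ i ∈ Dg g, (x i)^2) :=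
        (Finset.sum_fiberwise_of_maps_to hmaps _).symm
    _ ≤ ∑ d ∈ Finset.Icc 2 T, (d:ℝ)^(2*T)/(d.factorial : ℝ) * q^d * v^(2*(T-d)) := by
        refine Finset.sum_le_sum fun d hd => ?_
        have hcongr : ∑ g ∈ G.filter (fun g => (Dg g).card = d),
            q ^ (Dg g).card * (v ^ (2*(T - (Dg g).card)) * ∏ i ∈ Dg g, (x i)^2)
            = ∑ g ∈ G.filter (fun g => (Dg g).card = d),
                q ^ d * v ^ (2*(T-d)) * ∏ i ∈ Dg g, (x i)^2 := by
          refine Finset.sum_congr rfl fun g hg => ?_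
          rw [(Finset.mem_filter.1 hg).2]
          ring
        rw [hcongr, ← Finset.mul_sum]
        calc q ^ d * v ^ (2*(T-d)) * ∑ g ∈ G.filter (fun g => (Dg g).card = d),
              ∏ i ∈ Dg g, (x i)^2
            ≤ q ^ d * v ^ (2*(T-d)) * ((d:ℝ)^(2*T)/(d.factorial:ℝ)) := by
              refine mul_le_mul_of_nonneg_left (hcount d hd) ?_
              exact mul_nonneg (pow_nonneg hq _) (pow_nonneg hv _)
          _ = (d:ℝ)^(2*T)/(d.factorial:ℝ) * q^d * v^(2*(T-d)) := by ring

end Core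

/-- Lemma 19 of the paper, sup-form row moment upper bound. -/

theorem statement10 :
    ∃ C : ℝ, 0 < C ∧
      ∀ (n m s T : ℕ) (v : ℝ) (Ω : Type) (_ : MeasurableSpace Ω) (μ : Measure Ω)
        (_ : IsProbabilityMeasure μ) (J : SparseJL μ n m s) (r : Fin m) (x : Fin n → ℝ),
        linf x ≤ v → l2 x ≤ 1 → 0 < T → Even T →
        mom μ (T : ℝ) (J.Z r x) ≤ C *
          (v ^ 2 * sSup {z : ℝ | ∃ t : ℕ, 1 ≤ t ∧ t ≤ T / 2 ∧
            z = ((T : ℝ) ^ 2 / (t : ℝ) ^ 2) *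
              ((s : ℝ) / ((m : ℝ) * T * v ^ 2)) ^ ((1 : ℝ) / t)}) := by
  refine ⟨16 * Real.exp 1, by positivity, ?_⟩
  intro n m s T v Ω _inst μ _instP J r x hlinf hl2 hT hTe
  have hQ0 : (0:ℝ) ≤ sSup {z : ℝ | ∃ t : ℕ, 1 ≤ t ∧ t ≤ T / 2 ∧
      z = ((T : ℝ) ^ 2 / (t : ℝ) ^ 2) *
        ((s : ℝ) / ((m : ℝ) * T * v ^ 2)) ^ ((1 : ℝ) / t)} :=
    SJL_sSup_nonneg s m T v hT hTe
  have hTne : ((T:ℕ):ℝ) ≠ 0 := by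
    exact_mod_cast (show T ≠ 0 by omega)
  by_cases hx0 : x = 0
  · -- degenerate : Z = 0
    have hZ0 : J.Z r x = fun _ => (0:ℝ) := by
      funext ω
      subst hx0
      simp [SparseJL.Z]
    rw [hZ0]
    simp only [mom, abs_zero]
    rw [Real.zero_rpow hTne, integral_zero, Real.zero_rpow (by
      simp only [ne_eq, one_div, inv_eq_zero]
      exact hTne)]
    have : (0:ℝ) ≤ 16 * Real.exp 1 * (v ^ 2 * sSup {z : ℝ | ∃ t : ℕ, 1 ≤ t ∧ t ≤ T / 2 ∧
        z = ((T : ℝ) ^ 2 / (t : ℝ) ^ 2) *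
          ((s : ℝ) / ((m : ℝ) * T * v ^ 2)) ^ ((1 : ℝ) / t)}) :=
      mul_nonneg (by positivity) (mul_nonneg (sq_nonneg v) hQ0)
    exact this
  · -- main case
    obtain ⟨i0, hi0⟩ : ∃ i, x i ≠ 0 := by
      by_contra h
      push_neg at h
      exact hx0 (funext h)
    have hbdd : BddAbove (Set.range fun i => |x i|) :=
      Set.Finite.bddAbove (Set.finite_range _)
    have hlinfle : ∀ i, |x i| ≤ v := fun i => le_trans (le_ciSup hbdd i) hlinf
    have hv : 0 < v := lt_of_lt_of_le (abs_pos.2 hi0) (hlinfle i0)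
    have hx2 : ∑ i, x i ^ 2 ≤ 1 := by
      have h0 : 0 ≤ ∑ i, x i ^ 2 := Finset.sum_nonneg fun i _ => sq_nonneg _
      have hs := Real.sq_sqrt h0
      rw [l2] at hl2
      nlinarith [Real.sqrt_nonneg (∑ i, x i ^ 2)]
    have hm0 : 0 < m := r.pos
    -- the η family along row r
    have hacols : iIndepFun
        (fun i ω => J.η r i ω) μ :=
      J.η_cols_indep.comp (fun _ => (fun u : Fin m → ℝ => u r))
        (fun _ => measurable_pi_apply r)
    have haabs : ∀ i, ∀ᵐ ω ∂μ, |J.η r i ω| ≤ 1 := fun i =>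
      Filter.Eventually.of_forall fun ω => by
        rcases J.η_bool r i ω with h | h <;> rw [h] <;> norm_num
    have ha_prod : ∀ D : Finset (Fin n),
        ∫ ω, ∏ i ∈ D, J.η r i ω ∂μ = ((s:ℝ)/(m:ℝ)) ^ D.card := by
      intro D
      rw [SJL_integral_finset_prod _ hacols (fun i => J.η_meas r i) haabs D]
      rw [Finset.prod_congr rfl fun i _ => J.η_mean r i, Finset.prod_const]
    -- the σ family along row r
    have hb_pm : ∀ i, ∀ᵐ ω ∂μ, J.σ r i ω = 1 ∨ J.σ r i ω = -1 := fun i =>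
      SJL_rademacher_ae (J.σ_meas r i) (J.σ_rademacher r i).1 (J.σ_rademacher r i).2
    have hbabs : ∀ i, ∀ᵐ ω ∂μ, |J.σ r i ω| ≤ 1 := fun i => by
      filter_upwards [hb_pm i] with ω h
      rcases h with h | h <;> rw [h] <;> norm_num
    have hb_zero : ∀ E : Finset (Fin n), E.Nonempty →
        ∫ ω, ∏ i ∈ E, J.σ r i ω ∂μ = 0 := by
      intro E hE
      obtain ⟨j0, hj0⟩ := hE
      have hfam_meas : ∀ p : Fin m × Fin n, Measurable (fun ω => J.σ p.1 p.2 ω) :=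
        fun p => J.σ_meas p.1 p.2
      have hnotmem : (r, j0) ∉ (E.erase j0).image (fun i => ((r, i) : Fin m × Fin n)) := by
        intro h
        obtain ⟨j, hj, hje⟩ := Finset.mem_image.1 h
        have hjj : j = j0 := congrArg Prod.snd hje
        exact (Finset.notMem_erase j0 E) (hjj ▸ hj)
      have hind := J.σ_indep.indepFun_finsetProd_of_notMem hfam_meas hnotmem
      have hprodeq : (∏ p ∈ (E.erase j0).image (fun i => ((r, i) : Fin m × Fin n)),
          (fun ω => J.σ p.1 p.2 ω)) = fun ω => ∏ i ∈ E.erase j0, J.σ r i ω := by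
        funext ω
        rw [Finset.prod_apply]
        rw [Finset.prod_image (fun i _ j _ h => congrArg Prod.snd h)]
      rw [hprodeq] at hind
      have hint1 : Integrable (fun ω => ∏ i ∈ E.erase j0, J.σ r i ω) μ :=
        SJL_integrable_of_bdd (Finset.measurable_prod _ fun i _ => J.σ_meas r i)
          (SJL_prod_ae_bdd _ hbabs _)
      have hint2 : Integrable (fun ω => J.σ r j0 ω) μ :=
        SJL_integrable_of_bdd (J.σ_meas r j0) (hbabs j0)
      have hmul := hind.integral_mul_eq_mul_integral hint1.aestronglyMeasurable hint2.aestronglyMeasurable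
      calc ∫ ω, ∏ i ∈ E, J.σ r i ω ∂μ
          = ∫ ω, (∏ i ∈ E.erase j0, J.σ r i ω) * J.σ r j0 ω ∂μ := by
            refine integral_congr_ae (Filter.Eventually.of_forall fun ω => ?_)
            dsimp only
            rw [← Finset.mul_prod_erase E _ hj0]
            exact mul_comm _ _
        _ = (∫ ω, ∏ i ∈ E.erase j0, J.σ r i ω ∂μ) * ∫ ω, J.σ r j0 ω ∂μ := hmul
        _ = 0 := by
            rw [SJL_rademacher_integral (J.σ_meas r j0) (J.σ_rademacher r j0).1
              (J.σ_rademacher r j0).2, mul_zero]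
    -- independence of η-products and σ-products
    have hab : ∀ D E : Finset (Fin n), IndepFun (fun ω => ∏ i ∈ D, J.η r i ω)
        (fun ω => ∏ i ∈ E, J.σ r i ω) μ := by
      intro D E
      have hφ : Measurable (fun u : Fin m × Fin n → ℝ => ∏ i ∈ D, u (r, i)) :=
        Finset.measurable_prod _ fun i _ => measurable_pi_apply _
      have hψ : Measurable (fun u : Fin m × Fin n → ℝ => ∏ i ∈ E, u (r, i)) :=
        Finset.measurable_prod _ fun i _ => measurable_pi_apply _
      exact J.σ_η_indep.symm.comp hφ hψ
    -- apply the core bound and the analytic bound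
    have hcore := SJL_core (fun i => J.η r i) (fun i => J.σ r i) x v ((s:ℝ)/(m:ℝ)) T
      hT hv.le (by positivity) (fun i => J.η_meas r i) (fun i => J.σ_meas r i)
      (fun i ω => J.η_bool r i ω) hb_pm ha_prod hb_zero hab hlinfle hx2
    have hanal := SJL_analytic s m T v hv hm0 hT hTe
    have hEq : ∫ ω, |J.Z r x ω| ^ ((T:ℕ):ℝ) ∂μ = ∫ ω, (J.Z r x ω)^T ∂μ := by
      refine integral_congr_ae (Filter.Eventually.of_forall fun ω => ?_)
      dsimp only
      rw [Real.rpow_natCast]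
      exact hTe.pow_abs _
    have hEZ0 : 0 ≤ ∫ ω, |J.Z r x ω| ^ ((T:ℕ):ℝ) ∂μ :=
      integral_nonneg fun ω => Real.rpow_nonneg (abs_nonneg _) _
    have hchain : ∫ ω, |J.Z r x ω| ^ ((T:ℕ):ℝ) ∂μ
        ≤ (16 * Real.exp 1 * (v^2 * sSup {z : ℝ | ∃ t : ℕ, 1 ≤ t ∧ t ≤ T / 2 ∧
            z = ((T : ℝ) ^ 2 / (t : ℝ) ^ 2) *
              ((s : ℝ) / ((m : ℝ) * T * v ^ 2)) ^ ((1 : ℝ) / t)}))^T := by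
      rw [hEq]
      exact le_trans hcore hanal
    have hbase0 : (0:ℝ) ≤ 16 * Real.exp 1 * (v^2 * sSup {z : ℝ | ∃ t : ℕ, 1 ≤ t ∧ t ≤ T / 2 ∧
        z = ((T : ℝ) ^ 2 / (t : ℝ) ^ 2) *
          ((s : ℝ) / ((m : ℝ) * T * v ^ 2)) ^ ((1 : ℝ) / t)}) :=
      mul_nonneg (by positivity) (mul_nonneg (sq_nonneg v) hQ0)
    simp only [mom]
    calc (∫ ω, |J.Z r x ω| ^ ((T:ℕ):ℝ) ∂μ) ^ ((1:ℝ)/(T:ℝ))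
        ≤ ((16 * Real.exp 1 * (v^2 * sSup {z : ℝ | ∃ t : ℕ, 1 ≤ t ∧ t ≤ T / 2 ∧
            z = ((T : ℝ) ^ 2 / (t : ℝ) ^ 2) *
              ((s : ℝ) / ((m : ℝ) * T * v ^ 2)) ^ ((1 : ℝ) / t)}))^T) ^ ((1:ℝ)/(T:ℝ)) :=
          Real.rpow_le_rpow hEZ0 hchain (by positivity)
      _ = 16 * Real.exp 1 * (v^2 * sSup {z : ℝ | ∃ t : ℕ, 1 ≤ t ∧ t ≤ T / 2 ∧
            z = ((T : ℝ) ^ 2 / (t : ℝ) ^ 2) *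
              ((s : ℝ) / ((m : ℝ) * T * v ^ 2)) ^ ((1 : ℝ) / t)}) := by
          rw [← Real.rpow_natCast (16 * Real.exp 1 * (v^2 * _)) T,
            ← Real.rpow_mul hbase0, mul_one_div, div_self hTne, Real.rpow_one]
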